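/- The counterfactual probability P̃(s̃' | s̃, ã) = (∑_u 1[f(s̃,ã,u)=s̃'] · 1[f(s_t,a_t,u)=s_{t+1}] · θ(u)) / P(s_{t+1}|s_t,a_t) is at most min(1, P(s̃'|s̃,ã) / P(s_{t+1}|s_t,a_t)), whenever θ is consistent with the interventional distribution P. -/

import Mathlib

theorem cf_prob_upper_bound {S A U : Type*} [Fintype S] [Fintype A] [Fintype U]
    [DecidableEq S]
    (f : S → A → U → S) (θ : U → ℝ)
    (hθ0 : ∀ u, 0 ≤ θ u) (hθsum : ∑ u, θ u = 1)
    (P : S → S → A → ℝ)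
    (hcons : ∀ s a s', ∑ u ∈ Finset.univ.filter (fun u => f s a u = s'), θ u = P s' s a)
    (st st1 sc sc' : S) (a_t ac : A)
    (hpos : 0 < P st1 st a_t) :
    (∑ u ∈ Finset.univ.filter (fun u => f sc ac u = sc' ∧ f st a_t u = st1), θ u)
        / P st1 st a_t
      ≤ min 1 (P sc' sc ac / P st1 st a_t) := by
  have h1 : (∑ u ∈ Finset.univ.filter (fun u => f sc ac u = sc' ∧ f st a_t u = st1), θ u)
      ≤ P st1 st a_t := by
    rw [← hcons st a_t st1]
    exact Finset.sum_le_sum_of_subset_of_nonneg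
      (Finset.monotone_filter_right _ (fun u _ h => h.2)) (fun u _ _ => hθ0 u)
  have h2 : (∑ u ∈ Finset.univ.filter (fun u => f sc ac u = sc' ∧ f st a_t u = st1), θ u)
      ≤ P sc' sc ac := by
    rw [← hcons sc ac sc']
    exact Finset.sum_le_sum_of_subset_of_nonneg
      (Finset.monotone_filter_right _ (fun u _ h => h.1)) (fun u _ _ => hθ0 u)
  refine le_min ?_ ?_
  · rw [div_le_one hpos]; exact h1
  · gcongr
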